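/- Let A be a nonempty finite set, (R_A^T, ∨) the median join-semilattice of total preorders on A (join = transitive closure of union, order = inclusion) with median μ and meet-irreducibles M (the two-indifference-class total preorders), and let f : (R_A^T)^N → R_A^T be an aggregation rule (social welfare function). Then the following are equivalent: (i) f is strategy-proof on D^N for every rich domain D of locally unimodal preorders with respect to the median betweenness on R_A^T; (ii) for each m ∈ M there exists an order filter F_m of (P(N),⊆) such that for all profiles R_N of total preorders, f(R_N) = ⋂{ m ∈ M : {i ∈ N : R_i ⊆ m} ∈ F_m }. -/

import Mathlib

/-- A preorder (reflexive transitive relation) on `X`, used as an agent's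
preference over outcomes. -/
structure Pref (X : Type*) where
  rel : X → X → Prop
  refl : ∀ x, rel x x
  trans : ∀ x y z, rel x y → rel y z → rel x z

namespace Pref

/-- Strict (asymmetric) part of a preference preorder. -/
def strict {X : Type*} (R : Pref X) (x y : X) : Prop := R.rel x y ∧ ¬ R.rel y x

/-- `t` is the unique maximum of the preorder `R`. -/
def IsTop {X : Type*} (R : Pref X) (t : X) : Prop :=
  (∀ y, R.rel t y) ∧ ∀ t', (∀ y, R.rel t' y) → t' = t

end Pref

/-- The interval `I^μ(x,y) = {z : z = μ(x,y,z)}` induced by a ternary median operation. -/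
def medInterval {X : Type*} (μ : X → X → X → X) (x y : X) : Set X :=
  {z | μ x y z = z}

/-- A preorder on `X` is locally unimodal (single-peaked) w.r.t. the betweenness induced
by the median `μ`: it has a unique maximum `t`, and any outcome lying strictly between
`t` and another outcome `y` is not worse than `y`. -/
def LocallyUnimodal {X : Type*} (μ : X → X → X → X) (R : Pref X) : Prop :=
  ∃ t, R.IsTop t ∧ ∀ y z, z ∈ medInterval μ t y → z ≠ t → ¬ R.strict y z

/-- A rich domain of locally unimodal preorders: for all `x,y` it contains a preorder
with top `x` whose upper contour set at `y` is exactly the interval `I^μ(x,y)`. -/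
def RichDomain {X : Type*} (μ : X → X → X → X) (D : Set (Pref X)) : Prop :=
  (∀ R ∈ D, LocallyUnimodal μ R) ∧
  ∀ x y : X, ∃ R ∈ D, R.IsTop x ∧ {z | R.rel z y} = medInterval μ x y

/-- Strategy-proofness of an aggregation rule on profiles drawn from the domain `D`:
no agent `i` whose true preference lies in `D` (with top `tops i`) can strictly gain
by reporting `y` instead of her top. -/
def StrategyProofOn {X N : Type*} [DecidableEq N]
    (f : (N → X) → X) (D : Set (Pref X)) : Prop :=
  ∀ prefs : N → Pref X, (∀ i, prefs i ∈ D) →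
    ∀ tops : N → X, (∀ j, (prefs j).IsTop (tops j)) →
      ∀ (i : N) (y : X),
        ¬ (prefs i).strict (f (Function.update tops i y)) (f tops)

/-- `B_μ`-monotonicity: `f(x_N)` always lies in the median interval between `x_i` and
the outcome obtained when `i` deviates to `y`. -/
def BMuMonotonic {X N : Type*} [DecidableEq N]
    (μ : X → X → X → X) (f : (N → X) → X) : Prop :=
  ∀ (x : N → X) (i : N) (y : X),
    f x ∈ medInterval μ (x i) (f (Function.update x i y))

/-- `m` is meet-irreducible: whenever `m` is the greatest lower bound of a set `Y`,
`m` itself belongs to `Y`. -/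
def MeetIrred {X : Type*} [Preorder X] (m : X) : Prop :=
  ∀ Y : Set X, IsGLB Y m → m ∈ Y

/-- `j` is join-irreducible: whenever `j` is the least upper bound of a set `Y`,
`j` itself belongs to `Y`. -/
def JoinIrred {X : Type*} [Preorder X] (j : X) : Prop :=
  ∀ Y : Set X, IsLUB Y j → j ∈ Y

/-- Monotonic `M_X`-independence of an aggregation rule. -/
def MonotonicMIndependent {X N : Type*} [Preorder X] (f : (N → X) → X) : Prop :=
  ∀ (x y : N → X) (m : X), MeetIrred m →
    {i | x i ≤ m} ⊆ {i | y i ≤ m} → f x ≤ m → f y ≤ m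

/-- Upper distributivity: every principal order filter `↑u` is a distributive lattice,
expressed by the identity `x ⊔ (y ⊓ z) = (x ⊔ y) ⊓ (x ⊔ z)` for elements above a
common lower bound `u` (meets expressed via `IsGLB`). -/
def UpperDistributive (X : Type*) [SemilatticeSup X] : Prop :=
  ∀ u x y z m₁ m₂ : X, u ≤ x → u ≤ y → u ≤ z →
    IsGLB {y, z} m₁ → IsGLB {x ⊔ y, x ⊔ z} m₂ → x ⊔ m₁ = m₂

/-- Co-coronation (meet-Helly): if the three pairwise meets of `x,y,z` exist then the
meet of `{x,y,z}` exists. -/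
def MeetHelly (X : Type*) [SemilatticeSup X] : Prop :=
  ∀ x y z : X, (∃ a, IsGLB {x, y} a) → (∃ b, IsGLB {y, z} b) →
    (∃ c, IsGLB {x, z} c) → ∃ d, IsGLB ({x, y, z} : Set X) d

/-- `μ` is the median operation: `μ(x,y,z)` is the meet of `x⊔y`, `y⊔z`, `x⊔z`. -/
def IsMedianFn {X : Type*} [SemilatticeSup X] (μ : X → X → X → X) : Prop :=
  ∀ x y z : X, IsGLB {x ⊔ y, y ⊔ z, x ⊔ z} (μ x y z)

/-- Anonymity: invariance of the rule under permutations of the agents. -/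
def Anonymous {X N : Type*} (f : (N → X) → X) : Prop :=
  ∀ (x : N → X) (σ : Equiv.Perm N), f (x ∘ σ) = f x

/-- Bi-idempotence: if every agent proposes one of the two outcomes `y, z`, the rule
selects one of `y, z`. -/
def BiIdempotent {X N : Type*} (f : (N → X) → X) : Prop :=
  ∀ (x : N → X) (y z : X), (∀ i, x i = y ∨ x i = z) → f x = y ∨ f x = z

/-- The co-majority rule: `f(x_N)` is the meet over all majority coalitions `S`
(of size at least `⌊(|N|+2)/2⌋`) of the joins `⋁_{i ∈ S} x_i`. -/
def IsCoMajority {X N : Type*} [SemilatticeSup X] [Fintype N] (f : (N → X) → X) : Prop :=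
  ∀ x : N → X,
    IsGLB {z | ∃ S : Finset N, (Fintype.card N + 2) / 2 ≤ S.card ∧ IsLUB (x '' ↑S) z} (f x)

/-- An order filter of the poset of coalitions `(P(N), ⊆)`. -/
def OrderFilterN {N : Type*} (F : Set (Set N)) : Prop :=
  ∀ S T : Set N, S ∈ F → S ⊆ T → T ∈ F

/-- The locally `m`-winning coalitions of the rule `f`. -/
def winningCoalitions {X N : Type*} [Preorder X] (f : (N → X) → X) (m : X) : Set (Set N) :=
  {T | ∃ x : N → X, {i | x i ≤ m} = T ∧ f x ≤ m}

/-- Shortest-path distance in the covering graph of a partial order. -/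
noncomputable def covDist {X : Type*} [PartialOrder X] (x y : X) : ℕ :=
  sInf {n | ∃ p : ℕ → X, p 0 = x ∧ p n = y ∧ ∀ k < n, p k ⋖ p (k + 1) ∨ p (k + 1) ⋖ p k}

/-- The set of total preorders (reflexive, transitive, total relations) on `A`. -/
def TotalPreorderOn (A : Type*) : Type _ :=
  {R : A → A → Prop // Reflexive R ∧ Transitive R ∧ Total R}

namespace TotalPreorderOn

variable {A : Type*}

/-- Total preorders are ordered by set inclusion of relations. -/
instance : PartialOrder (TotalPreorderOn A) where
  le R S := ∀ a b, R.1 a b → S.1 a b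
  le_refl R := fun _ _ h => h
  le_trans R S T h₁ h₂ := fun a b h => h₂ a b (h₁ a b h)
  le_antisymm R S h₁ h₂ :=
    Subtype.ext (funext fun a => funext fun b => propext ⟨h₁ a b, h₂ a b⟩)

/-- The join of two total preorders: the transitive closure of their union. -/
def join (R S : TotalPreorderOn A) : TotalPreorderOn A :=
  ⟨Relation.ReflTransGen (fun a b => R.1 a b ∨ S.1 a b),
    fun _ => Relation.ReflTransGen.refl,
    fun _ _ _ h₁ h₂ => Relation.ReflTransGen.trans h₁ h₂,
    fun a b => (R.2.2.2 a b).imp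
      (fun h => Relation.ReflTransGen.single (Or.inl h))
      (fun h => Relation.ReflTransGen.single (Or.inl h))⟩

theorem le_def {R S : TotalPreorderOn A} : R ≤ S ↔ ∀ a b, R.1 a b → S.1 a b :=
  Iff.rfl

/-- `(R_A^T, ∨)` is a join-semilattice, with join the transitive closure of union. -/
instance : SemilatticeSup (TotalPreorderOn A) where
  sup := join
  le_sup_left R S := fun _ _ h => Relation.ReflTransGen.single (Or.inl h)
  le_sup_right R S := fun _ _ h => Relation.ReflTransGen.single (Or.inr h)
  sup_le R S T h₁ h₂ := by
    intro a b h
    induction h with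
    | refl => exact T.2.1 a
    | @tail b c _ hstep ih => exact T.2.2.1 ih (hstep.elim (h₁ _ _) (h₂ _ _))

/-- The universal relation is the top total preorder. -/
instance : OrderTop (TotalPreorderOn A) where
  top := ⟨fun _ _ => True, fun _ => trivial, fun _ _ _ _ _ => trivial,
    fun _ _ => Or.inl trivial⟩
  le_top _ := fun _ _ _ => trivial

instance [Finite A] : Finite (TotalPreorderOn A) := by
  unfold TotalPreorderOn; infer_instance

theorem sup_def (R S : TotalPreorderOn A) :
    R ⊔ S = join R S := rfl

end TotalPreorderOn

namespace TotalPreorderOn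

variable {A : Type*}

theorem refl' (R : TotalPreorderOn A) : Reflexive R.1 := R.2.1
theorem trans' (R : TotalPreorderOn A) : Transitive R.1 := R.2.2.1
theorem total' (R : TotalPreorderOn A) : Total R.1 := R.2.2.2

/-- The upper sets ("upsets") of a total preorder. -/
def Up (R : TotalPreorderOn A) : Set (Set A) :=
  {U | ∀ a b, R.1 a b → b ∈ U → a ∈ U}

theorem up_antitone {R S : TotalPreorderOn A} (h : R ≤ S) : Up S ⊆ Up R :=
  fun _U hU a b hab hb => hU a b (h a b hab) hb

theorem exists_sep {R : TotalPreorderOn A} {a b : A} (h : ¬ R.1 a b) :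
    ∃ U ∈ Up R, b ∈ U ∧ a ∉ U := by
  refine ⟨{c | ¬ R.1 a c}, ?_, h, fun hc => hc (R.refl' a)⟩
  exact fun c d hcd hd hac => hd (R.trans' hac hcd)

theorem rel_iff_up {R : TotalPreorderOn A} {a b : A} :
    R.1 a b ↔ ∀ U ∈ Up R, b ∈ U → a ∈ U := by
  constructor
  · exact fun h U hU => hU a b h
  · intro h
    by_contra hab
    obtain ⟨U, hU, hb, ha⟩ := exists_sep hab
    exact ha (h U hU hb)

theorem up_chain {R : TotalPreorderOn A} {U V : Set A} (hU : U ∈ Up R) (hV : V ∈ Up R) :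
    U ⊆ V ∨ V ⊆ U := by
  by_cases h : U ⊆ V
  · exact Or.inl h
  · right
    obtain ⟨c, hcU, hcV⟩ := Set.not_subset.1 h
    intro d hdV
    rcases R.total' c d with h1 | h2
    · exact absurd (hV c d h1 hdV) hcV
    · exact hU d c h2 hcU

theorem le_iff_up {R S : TotalPreorderOn A} : R ≤ S ↔ Up S ⊆ Up R := by
  constructor
  · exact up_antitone
  · intro h a b hab
    exact rel_iff_up.2 fun U hUS hb => (h hUS) a b hab hb

/-- The two-class total preorder with top class `U` (improper `U` gives `⊤`). -/
def mU (U : Set A) : TotalPreorderOn A :=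
  ⟨fun a b => b ∈ U → a ∈ U, fun _ h => h, fun _ _ _ h1 h2 hc => h1 (h2 hc), by
    intro a b
    by_cases ha : a ∈ U
    · exact Or.inl fun _ => ha
    · exact Or.inr fun h => absurd h ha⟩

theorem le_mU_iff {R : TotalPreorderOn A} {U : Set A} : R ≤ mU U ↔ U ∈ Up R :=
  Iff.rfl

theorem mem_up_sup {R S : TotalPreorderOn A} {U : Set A} :
    U ∈ Up (R ⊔ S) ↔ U ∈ Up R ∧ U ∈ Up S := by
  constructor
  · exact fun h => ⟨up_antitone le_sup_left h, up_antitone le_sup_right h⟩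
  · intro ⟨h1, h2⟩
    exact le_mU_iff.1 (sup_le (le_mU_iff.2 h1) (le_mU_iff.2 h2))

theorem exists_min_finset (R : TotalPreorderOn A) (t : Finset A) :
    t.Nonempty → ∃ u ∈ t, ∀ w ∈ t, R.1 w u := by
  classical
  induction t using Finset.induction_on with
  | empty => intro h; simp at h
  | @insert a s ha ih =>
    intro _
    by_cases hs : s.Nonempty
    · obtain ⟨u, hu, hmin⟩ := ih hs
      rcases R.total' a u with h | h
      · refine ⟨u, Finset.mem_insert_of_mem hu, ?_⟩
        intro w hw
        rcases Finset.mem_insert.1 hw with rfl | hw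
        · exact h
        · exact hmin w hw
      · refine ⟨a, Finset.mem_insert_self _ _, ?_⟩
        intro w hw
        rcases Finset.mem_insert.1 hw with rfl | hw
        · exact R.refl' w
        · exact R.trans' (hmin w hw) h
    · rw [Finset.not_nonempty_iff_eq_empty] at hs
      subst hs
      refine ⟨a, Finset.mem_insert_self _ _, ?_⟩
      intro w hw
      rcases Finset.mem_insert.1 hw with rfl | hw
      · exact R.refl' w
      · simp at hw

theorem exists_min [Finite A] (R : TotalPreorderOn A) (s : Set A) (hs : s.Nonempty) :
    ∃ u ∈ s, ∀ w ∈ s, R.1 w u := by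
  obtain ⟨u, hu, hmin⟩ := exists_min_finset R (Set.toFinite s).toFinset
    (by rwa [Set.Finite.toFinset_nonempty])
  exact ⟨u, (Set.Finite.mem_toFinset _).1 hu,
    fun w hw => hmin w ((Set.Finite.mem_toFinset _).2 hw)⟩

theorem exists_max [Finite A] (R : TotalPreorderOn A) (s : Set A) (hs : s.Nonempty) :
    ∃ u ∈ s, ∀ w ∈ s, R.1 u w := by
  exact exists_min ⟨fun a b => R.1 b a, fun a => R.refl' a,
    fun _ _ _ h1 h2 => R.trans' h2 h1, fun a b => R.total' b a⟩ s hs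

theorem total_aux (R J K : TotalPreorderOn A) (hJ : R ≤ J) (hK : R ≤ K) {a b : A}
    (h1 : ¬ J.1 a b) (h2 : ¬ K.1 b a) : False := by
  obtain ⟨U, hU, hbU, haU⟩ := exists_sep h1
  obtain ⟨V, hV, haV, hbV⟩ := exists_sep h2
  rcases up_chain (up_antitone hJ hU) (up_antitone hK hV) with h | h
  · exact hbV (h hbU)
  · exact haU (h haV)

end TotalPreorderOn
namespace TotalPreorderOn

variable {A : Type*}

theorem mem_triple_left {x y z : TotalPreorderOn A} :
    x ⊔ y ∈ ({x ⊔ y, y ⊔ z, x ⊔ z} : Set (TotalPreorderOn A)) := Set.mem_insert _ _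

theorem mem_triple_mid {x y z : TotalPreorderOn A} :
    y ⊔ z ∈ ({x ⊔ y, y ⊔ z, x ⊔ z} : Set (TotalPreorderOn A)) :=
  Set.mem_insert_of_mem _ (Set.mem_insert _ _)

theorem mem_triple_right {x y z : TotalPreorderOn A} :
    x ⊔ z ∈ ({x ⊔ y, y ⊔ z, x ⊔ z} : Set (TotalPreorderOn A)) :=
  Set.mem_insert_of_mem _ (Set.mem_insert_of_mem _ rfl)

theorem isGLB_triple_iff [Finite A] (x y z : TotalPreorderOn A) :
    IsGLB ({x ⊔ y, y ⊔ z, x ⊔ z} : Set (TotalPreorderOn A)) z ↔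
      (Up x ∩ Up y ⊆ Up z ∧ Up z ⊆ Up x ∪ Up y) := by
  constructor
  · intro hz
    have hxy : z ≤ x ⊔ y := hz.1 mem_triple_left
    have hsub1 : Up x ∩ Up y ⊆ Up z := fun V hV =>
      up_antitone hxy (mem_up_sup.2 ⟨hV.1, hV.2⟩)
    refine ⟨hsub1, ?_⟩
    intro U hUz
    by_contra hc
    simp only [Set.mem_union, not_or] at hc
    obtain ⟨hUx, hUy⟩ := hc
    have hUx' : ∃ a b, x.1 a b ∧ b ∈ U ∧ a ∉ U := by
      simp only [Up, Set.mem_setOf_eq] at hUx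
      push_neg at hUx
      obtain ⟨a, b, hab, hb, ha⟩ := hUx
      exact ⟨a, b, hab, hb, ha⟩
    obtain ⟨a1, b1, hxab, hb1, ha1⟩ := hUx'
    obtain ⟨u, huU, humin⟩ := exists_min z U ⟨b1, hb1⟩
    obtain ⟨l, hlU, hlmax⟩ := exists_max z Uᶜ ⟨a1, ha1⟩
    have hprop : ∀ V : Set A,
        (V ∈ Up x ∩ Up y ∨ V ∈ Up y ∩ Up z ∨ V ∈ Up x ∩ Up z) → u ∈ V → l ∈ V := by
      intro V hV huV
      have hVz : V ∈ Up z := by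
        rcases hV with h | h | h
        · exact hsub1 h
        · exact h.2
        · exact h.2
      have hVU : V ≠ U := by
        rintro rfl
        rcases hV with h | h | h
        · exact hUx h.1
        · exact hUy h.1
        · exact hUx h.1
      rcases up_chain hVz hUz with hVsub | hUsub
      · exfalso
        obtain ⟨w, hwU, hwV⟩ := Set.exists_of_ssubset (Set.ssubset_iff_subset_ne.2 ⟨hVsub, hVU⟩)
        exact hwV (hVz w u (humin w hwU) huV)
      · obtain ⟨w, hwV, hwU⟩ :=
          Set.exists_of_ssubset (Set.ssubset_iff_subset_ne.2 ⟨hUsub, Ne.symm hVU⟩)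
        exact hVz l w (hlmax w hwU) hwV
    have hle3 : z ≤ x ⊔ z := le_sup_right
    have hle2 : z ≤ y ⊔ z := le_sup_right
    set T : TotalPreorderOn A :=
      ⟨fun a b => (x ⊔ y).1 a b ∧ (y ⊔ z).1 a b ∧ (x ⊔ z).1 a b,
        fun a => ⟨(x ⊔ y).refl' a, (y ⊔ z).refl' a, (x ⊔ z).refl' a⟩,
        fun _ _ _ h1 h2 => ⟨(x ⊔ y).trans' h1.1 h2.1, (y ⊔ z).trans' h1.2.1 h2.2.1,
          (x ⊔ z).trans' h1.2.2 h2.2.2⟩, by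
        intro a b
        by_contra hcon
        push_neg at hcon
        obtain ⟨hc1, hc2⟩ := hcon
        have d1 : ¬ (x ⊔ y).1 a b ∨ ¬ (y ⊔ z).1 a b ∨ ¬ (x ⊔ z).1 a b := by tauto
        have d2 : ¬ (x ⊔ y).1 b a ∨ ¬ (y ⊔ z).1 b a ∨ ¬ (x ⊔ z).1 b a := by tauto
        rcases d1 with h | h | h <;> rcases d2 with h' | h' | h' <;>
          exact total_aux z _ _ (by first | exact hxy | exact hle2 | exact hle3)
            (by first | exact hxy | exact hle2 | exact hle3) h h'⟩ with hT
    have hTlb : T ∈ lowerBounds ({x ⊔ y, y ⊔ z, x ⊔ z} : Set (TotalPreorderOn A)) := by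
      rintro J hJ
      simp only [Set.mem_insert_iff, Set.mem_singleton_iff] at hJ
      rcases hJ with rfl | rfl | rfl
      · exact fun a b h => h.1
      · exact fun a b h => h.2.1
      · exact fun a b h => h.2.2
    have hTz : T ≤ z := hz.2 hTlb
    have hTlu : T.1 l u := by
      refine ⟨?_, ?_, ?_⟩
      · refine rel_iff_up.2 fun V hV hu => ?_
        exact hprop V (Or.inl ⟨(mem_up_sup.1 hV).1, (mem_up_sup.1 hV).2⟩) hu
      · refine rel_iff_up.2 fun V hV hu => ?_
        exact hprop V (Or.inr (Or.inl ⟨(mem_up_sup.1 hV).1, (mem_up_sup.1 hV).2⟩)) hu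
      · refine rel_iff_up.2 fun V hV hu => ?_
        exact hprop V (Or.inr (Or.inr ⟨(mem_up_sup.1 hV).1, (mem_up_sup.1 hV).2⟩)) hu
    exact hlU (hUz l u (hTz l u hTlu) huU)
  · rintro ⟨h1, h2⟩
    constructor
    · rintro J hJ
      simp only [Set.mem_insert_iff, Set.mem_singleton_iff] at hJ
      rcases hJ with rfl | rfl | rfl
      · intro a b hab
        refine rel_iff_up.2 fun V hV hb => ?_
        exact (h1 ⟨(mem_up_sup.1 hV).1, (mem_up_sup.1 hV).2⟩) a b hab hb
      · exact le_sup_right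
      · exact le_sup_right
    · intro w hw
      have hw2 : w ≤ y ⊔ z := hw mem_triple_mid
      have hw3 : w ≤ x ⊔ z := hw mem_triple_right
      intro a b hab
      refine rel_iff_up.2 fun V hV hb => ?_
      rcases h2 hV with hVx | hVy
      · exact (mem_up_sup.2 ⟨hVx, hV⟩) a b (hw3 a b hab) hb
      · exact (mem_up_sup.2 ⟨hVy, hV⟩) a b (hw2 a b hab) hb

end TotalPreorderOn
namespace TotalPreorderOn

variable {A : Type*}

theorem mem_medInterval_iff [Finite A]
    {μ : TotalPreorderOn A → TotalPreorderOn A → TotalPreorderOn A → TotalPreorderOn A}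
    (hμ : IsMedianFn μ) {x y z : TotalPreorderOn A} :
    z ∈ medInterval μ x y ↔ (Up x ∩ Up y ⊆ Up z ∧ Up z ⊆ Up x ∪ Up y) := by
  rw [show (z ∈ medInterval μ x y) = (μ x y z = z) from rfl]
  rw [← isGLB_triple_iff]
  constructor
  · intro h
    have := hμ x y z
    rwa [h] at this
  · intro h; exact (hμ x y z).unique h

theorem left_mem_medInterval [Finite A]
    {μ : TotalPreorderOn A → TotalPreorderOn A → TotalPreorderOn A → TotalPreorderOn A}
    (hμ : IsMedianFn μ) {x y : TotalPreorderOn A} : x ∈ medInterval μ x y :=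
  (mem_medInterval_iff hμ).2 ⟨fun _U hU => hU.1, fun _U hU => Or.inl hU⟩

theorem right_mem_medInterval [Finite A]
    {μ : TotalPreorderOn A → TotalPreorderOn A → TotalPreorderOn A → TotalPreorderOn A}
    (hμ : IsMedianFn μ) {x y : TotalPreorderOn A} : y ∈ medInterval μ x y :=
  (mem_medInterval_iff hμ).2 ⟨fun _U hU => hU.2, fun _U hU => Or.inr hU⟩

theorem eq_of_mem_medInterval_self [Finite A]
    {μ : TotalPreorderOn A → TotalPreorderOn A → TotalPreorderOn A → TotalPreorderOn A}
    (hμ : IsMedianFn μ) {x z : TotalPreorderOn A} (h : z ∈ medInterval μ x x) : z = x := by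
  obtain ⟨h1, h2⟩ := (mem_medInterval_iff hμ).1 h
  have hxz : Up x ⊆ Up z := fun U hU => h1 ⟨hU, hU⟩
  have hzx : Up z ⊆ Up x := fun U hU => (h2 hU).elim id id
  exact le_antisymm (le_iff_up.2 hxz) (le_iff_up.2 hzx)

theorem medInterval_trans [Finite A]
    {μ : TotalPreorderOn A → TotalPreorderOn A → TotalPreorderOn A → TotalPreorderOn A}
    (hμ : IsMedianFn μ) {v w y' z : TotalPreorderOn A}
    (h1 : z ∈ medInterval μ v y') (h2 : y' ∈ medInterval μ v w) :
    z ∈ medInterval μ v w := by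
  obtain ⟨h1a, h1b⟩ := (mem_medInterval_iff hμ).1 h1
  obtain ⟨h2a, h2b⟩ := (mem_medInterval_iff hμ).1 h2
  refine (mem_medInterval_iff hμ).2 ⟨?_, ?_⟩
  · intro U hU
    exact h1a ⟨hU.1, h2a hU⟩
  · intro U hU
    rcases h1b hU with h | h
    · exact Or.inl h
    · exact h2b h

/-- A proper two-class total preorder is meet-irreducible. -/
theorem meetIrred_mU {U : Set A} {u l : A} (hu : u ∈ U) (hl : l ∉ U) :
    MeetIrred (mU U) := by
  intro Y hY
  by_contra hm
  have htop : ∀ R ∈ Y, R = ⊤ := by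
    intro R hR
    have hle : mU U ≤ R := hY.1 hR
    have hne : R ≠ mU U := fun h => hm (h ▸ hR)
    obtain ⟨c, d, hRcd, hcd⟩ : ∃ c d, R.1 c d ∧ ¬ (mU U).1 c d := by
      by_contra h
      push_neg at h
      exact hne (le_antisymm (fun a b hab => h a b hab) hle)
    have hdU : d ∈ U := by
      by_contra h
      exact hcd fun hh => absurd hh h
    have hcU : c ∉ U := fun h => hcd fun _ => h
    refine le_antisymm le_top ?_
    intro e g _
    by_cases he : e ∈ U
    · exact hle e g (fun _ => he)
    · have h1 : R.1 e c := hle e c (fun h => absurd h hcU)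
      have h2 : R.1 d g := hle d g (fun _ => hdU)
      exact R.trans' (R.trans' h1 hRcd) h2
  have hlb : (⊤ : TotalPreorderOn A) ∈ lowerBounds Y := by
    intro R hR
    rw [htop R hR]
  have := hY.2 hlb
  exact hl (this l u trivial hu)

/-- Every meet-irreducible element is a two-class total preorder `mU U`. -/
theorem meetIrred_exists_mU {m : TotalPreorderOn A} (hm : MeetIrred m) :
    ∃ U ∈ Up m, m = mU U := by
  have hglb : IsGLB ((fun U => mU U) '' Up m) m := by
    constructor
    · rintro R ⟨U, hU, rfl⟩
      exact le_mU_iff.2 hU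
    · intro w hw
      intro a b hab
      refine rel_iff_up.2 fun U hU hb => ?_
      exact hw ⟨U, hU, rfl⟩ a b hab hb
  obtain ⟨U, hU, heq⟩ := hm _ hglb
  exact ⟨U, hU, heq.symm⟩

end TotalPreorderOn
open Classical in
/-- Three-tier preference with top `v`, middle tier `I^μ(v,w) \ {v}`. -/
noncomputable def lvlP {X : Type*} (μ : X → X → X → X) (v w t : X) : ℕ :=
  if t = v then 2 else if t ∈ medInterval μ v w then 1 else 0

/-- The canonical locally unimodal preference with top `v` and contour `I^μ(v,w)` at `w`. -/
noncomputable def Ppref {X : Type*} (μ : X → X → X → X) (v w : X) : Pref X :=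
  ⟨fun s t => lvlP μ v w t ≤ lvlP μ v w s, fun _ => le_refl _,
    fun _ _ _ h1 h2 => le_trans h2 h1⟩

theorem lvlP_le_two {X : Type*} (μ : X → X → X → X) (v w t : X) : lvlP μ v w t ≤ 2 := by
  unfold lvlP; split_ifs <;> omega

theorem lvlP_self {X : Type*} (μ : X → X → X → X) (v w : X) : lvlP μ v w v = 2 := by
  unfold lvlP; rw [if_pos rfl]

theorem eq_of_two_le_lvlP {X : Type*} {μ : X → X → X → X} {v w t : X}
    (h : 2 ≤ lvlP μ v w t) : t = v := by
  unfold lvlP at h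
  split_ifs at h with h1 h2
  · exact h1
  · omega
  · omega

theorem one_le_lvlP_iff {X : Type*} {μ : X → X → X → X} {v w t : X} :
    1 ≤ lvlP μ v w t ↔ (t = v ∨ t ∈ medInterval μ v w) := by
  unfold lvlP
  split_ifs with h1 h2
  · exact ⟨fun _ => Or.inl h1, fun _ => by omega⟩
  · exact ⟨fun _ => Or.inr h2, fun _ => le_refl 1⟩
  · exact ⟨fun h => by omega, fun h => (h.elim (fun hh => absurd hh h1) fun hh => absurd hh h2)⟩

theorem Ppref_isTop {X : Type*} (μ : X → X → X → X) (v w : X) : (Ppref μ v w).IsTop v := by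
  constructor
  · intro t
    show lvlP μ v w t ≤ lvlP μ v w v
    rw [lvlP_self]
    exact lvlP_le_two μ v w t
  · intro t' h
    have := h v
    rw [show (Ppref μ v w).rel t' v = (lvlP μ v w v ≤ lvlP μ v w t') from rfl, lvlP_self] at this
    exact eq_of_two_le_lvlP this

namespace TotalPreorderOn

variable {A : Type*}

theorem Ppref_contour [Finite A]
    {μ : TotalPreorderOn A → TotalPreorderOn A → TotalPreorderOn A → TotalPreorderOn A}
    (hμ : IsMedianFn μ) (v w : TotalPreorderOn A) :
    {z | (Ppref μ v w).rel z w} = medInterval μ v w := by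
  ext t
  show lvlP μ v w w ≤ lvlP μ v w t ↔ t ∈ medInterval μ v w
  by_cases hw : w = v
  · subst hw
    rw [lvlP_self]
    constructor
    · intro h
      rw [eq_of_two_le_lvlP h]
      exact left_mem_medInterval hμ
    · intro h
      rw [eq_of_mem_medInterval_self hμ h, lvlP_self]
  · have hw1 : lvlP μ v w w = 1 := by
      unfold lvlP
      rw [if_neg hw, if_pos (right_mem_medInterval hμ)]
    rw [hw1, one_le_lvlP_iff]
    constructor
    · rintro (rfl | h)
      · exact left_mem_medInterval hμ
      · exact h
    · exact Or.inr

theorem Ppref_locallyUnimodal [Finite A]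
    {μ : TotalPreorderOn A → TotalPreorderOn A → TotalPreorderOn A → TotalPreorderOn A}
    (hμ : IsMedianFn μ) (v w : TotalPreorderOn A) :
    LocallyUnimodal μ (Ppref μ v w) := by
  refine ⟨v, Ppref_isTop μ v w, ?_⟩
  intro y' z hz hzv hstrict
  obtain ⟨hs1, hs2⟩ := hstrict
  have hlt : lvlP μ v w z < lvlP μ v w y' := Nat.lt_of_not_le hs2
  by_cases hy'v : y' = v
  · subst hy'v
    exact hzv (eq_of_mem_medInterval_self hμ hz)
  · by_cases hy'I : y' ∈ medInterval μ v w
    · have hy1 : lvlP μ v w y' = 1 := by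
        unfold lvlP; rw [if_neg hy'v, if_pos hy'I]
      have hz1 : 1 ≤ lvlP μ v w z :=
        one_le_lvlP_iff.2 (Or.inr (medInterval_trans hμ hz hy'I))
      omega
    · have hy0 : lvlP μ v w y' = 0 := by
        unfold lvlP; rw [if_neg hy'v, if_neg hy'I]
      omega

end TotalPreorderOn
namespace TotalPreorderOn

variable {A : Type*} {N : Type*}

theorem select [Finite A] {F : TotalPreorderOn A → Set (Set N)}
    {f : (N → TotalPreorderOn A) → TotalPreorderOn A}
    (hrep : ∀ (R : N → TotalPreorderOn A) (a b : A),
      (f R).1 a b ↔ ∀ m : TotalPreorderOn A, MeetIrred m → {i | R i ≤ m} ∈ F m → m.1 a b)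
    {U : Set A} {u₀ l₀ : A} (hu₀ : u₀ ∈ U) (hl₀ : l₀ ∉ U)
    (x : N → TotalPreorderOn A) (hfx : U ∈ Up (f x)) :
    {i | x i ≤ mU U} ∈ F (mU U) := by
  by_contra hnot
  obtain ⟨u, huU, humin⟩ := exists_min (f x) U ⟨u₀, hu₀⟩
  obtain ⟨l, hlU, hlmax⟩ := exists_max (f x) Uᶜ ⟨l₀, hl₀⟩
  have hlu : (f x).1 l u := by
    refine (hrep x l u).2 ?_
    intro m' hmi' hsel'
    obtain ⟨V, _hVUp, heq⟩ := meetIrred_exists_mU hmi'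
    have hRm' : f x ≤ m' := fun a b hab => (hrep x a b).1 hab m' hmi' hsel'
    have hVUpR : V ∈ Up (f x) := le_mU_iff.1 (heq ▸ hRm')
    have hVU : V ≠ U := by
      rintro rfl
      rw [heq] at hsel'
      exact hnot hsel'
    rw [heq]
    intro huV
    rcases up_chain hVUpR hfx with hVsub | hUsub
    · exfalso
      obtain ⟨w, hwU, hwV⟩ := Set.exists_of_ssubset (Set.ssubset_iff_subset_ne.2 ⟨hVsub, hVU⟩)
      exact hwV (hVUpR w u (humin w hwU) huV)
    · obtain ⟨w, hwV, hwU⟩ :=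
        Set.exists_of_ssubset (Set.ssubset_iff_subset_ne.2 ⟨hUsub, Ne.symm hVU⟩)
      exact hVUpR l w (hlmax w hwU) hwV
  exact hlU (hfx l u hlu huU)

theorem bmu_of_rep [Finite A] [DecidableEq N]
    {μ : TotalPreorderOn A → TotalPreorderOn A → TotalPreorderOn A → TotalPreorderOn A}
    (hμ : IsMedianFn μ)
    {F : TotalPreorderOn A → Set (Set N)}
    {f : (N → TotalPreorderOn A) → TotalPreorderOn A}
    (hfilt : ∀ m, MeetIrred m → OrderFilterN (F m))
    (hrep : ∀ (R : N → TotalPreorderOn A) (a b : A),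
      (f R).1 a b ↔ ∀ m : TotalPreorderOn A, MeetIrred m → {i | R i ≤ m} ∈ F m → m.1 a b)
    (x : N → TotalPreorderOn A) (i : N) (y : TotalPreorderOn A) :
    f x ∈ medInterval μ (x i) (f (Function.update x i y)) := by
  rw [mem_medInterval_iff hμ]
  constructor
  · rintro U ⟨hUp, hUo'⟩
    by_cases h1 : ∃ u, u ∈ U
    swap
    · exact fun a b _ hb => absurd ⟨b, hb⟩ h1
    by_cases h2 : ∃ l, l ∉ U
    swap
    · intro a b _ _
      by_contra ha
      exact h2 ⟨a, ha⟩
    obtain ⟨u, hu⟩ := h1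
    obtain ⟨l, hl⟩ := h2
    have hmi : MeetIrred (mU U) := meetIrred_mU hu hl
    have hsel' := select hrep hu hl (Function.update x i y) hUo'
    have hsub : {j | Function.update x i y j ≤ mU U} ⊆ {j | x j ≤ mU U} := by
      intro j hj
      by_cases hji : j = i
      · subst hji
        exact le_mU_iff.2 hUp
      · rwa [Set.mem_setOf_eq, Function.update_of_ne hji] at hj
    have hsel := hfilt (mU U) hmi _ _ hsel' hsub
    exact le_mU_iff.1 fun a b hab => (hrep x a b).1 hab (mU U) hmi hsel
  · intro U hUo
    by_cases hUp : U ∈ Up (x i)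
    · exact Or.inl hUp
    by_cases h1 : ∃ u, u ∈ U
    swap
    · exact Or.inl fun a b _ hb => absurd ⟨b, hb⟩ h1
    by_cases h2 : ∃ l, l ∉ U
    swap
    · refine Or.inl fun a b _ _ => ?_
      by_contra ha
      exact h2 ⟨a, ha⟩
    obtain ⟨u, hu⟩ := h1
    obtain ⟨l, hl⟩ := h2
    have hmi : MeetIrred (mU U) := meetIrred_mU hu hl
    have hsel := select hrep hu hl x hUo
    have hsub : {j | x j ≤ mU U} ⊆ {j | Function.update x i y j ≤ mU U} := by
      intro j hj
      by_cases hji : j = i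
      · subst hji
        exact absurd (le_mU_iff.1 hj) hUp
      · rwa [Set.mem_setOf_eq, Function.update_of_ne hji]
    have hsel' := hfilt (mU U) hmi _ _ hsel hsub
    exact Or.inr (le_mU_iff.1 fun a b hab =>
      (hrep (Function.update x i y) a b).1 hab (mU U) hmi hsel')

end TotalPreorderOn

open TotalPreorderOn

/-- **Proposition 2.** A social welfare function on profiles of total preorders is
strategy-proof on every rich domain of locally unimodal preorders (w.r.t. the median
betweenness of the semilattice of total preorders) iff there is a family of order
filters `F m`, one for each meet-irreducible `m`, such that `f(R_N)` is the
intersection of all meet-irreducible total preorders `m` with `{i : R_i ⊆ m} ∈ F m`. -/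
theorem swf_strategyProof_iff_filterRepresentation
    (A : Type*) [Fintype A] [Nonempty A] {N : Type*} [Fintype N] [DecidableEq N]
    (μ : TotalPreorderOn A → TotalPreorderOn A → TotalPreorderOn A → TotalPreorderOn A)
    (hμ : IsMedianFn μ)
    (f : (N → TotalPreorderOn A) → TotalPreorderOn A) :
    (∀ D : Set (Pref (TotalPreorderOn A)), RichDomain μ D → StrategyProofOn f D) ↔
      ∃ F : TotalPreorderOn A → Set (Set N),
        (∀ m, MeetIrred m → OrderFilterN (F m)) ∧
        ∀ (R : N → TotalPreorderOn A) (a b : A),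
          (f R).1 a b ↔
            ∀ m : TotalPreorderOn A, MeetIrred m → {i | R i ≤ m} ∈ F m → m.1 a b := by
  classical
  constructor
  · intro hSP
    -- the rich domain of canonical three-tier preferences
    set D : Set (Pref (TotalPreorderOn A)) := {R | ∃ v w, R = Ppref μ v w} with hD
    have hrich : RichDomain μ D := by
      constructor
      · rintro R ⟨v, w, rfl⟩
        exact Ppref_locallyUnimodal hμ v w
      · intro v w
        exact ⟨Ppref μ v w, ⟨v, w, rfl⟩, Ppref_isTop μ v w, Ppref_contour hμ v w⟩
    -- strategy-proofness implies B_μ-monotonicity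
    have hBMu : ∀ (x : N → TotalPreorderOn A) (i : N) (y : TotalPreorderOn A),
        f x ∈ medInterval μ (x i) (f (Function.update x i y)) := by
      intro x i y
      by_contra ho
      set o' := f (Function.update x i y) with ho'
      set prefs : N → Pref (TotalPreorderOn A) :=
        Function.update (fun j => Ppref μ (x j) (x j)) i (Ppref μ (x i) o') with hprefs
      have hmem : ∀ j, prefs j ∈ D := by
        intro j
        by_cases hji : j = i
        · subst hji
          rw [hprefs, Function.update_self]
          exact ⟨x j, o', rfl⟩
        · rw [hprefs, Function.update_of_ne hji]
          exact ⟨x j, x j, rfl⟩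
      have htops : ∀ j, (prefs j).IsTop (x j) := by
        intro j
        by_cases hji : j = i
        · subst hji
          rw [hprefs, Function.update_self]
          exact Ppref_isTop μ (x j) o'
        · rw [hprefs, Function.update_of_ne hji]
          exact Ppref_isTop μ (x j) (x j)
      have hnostrict := hSP D hrich prefs hmem x htops i y
      apply hnostrict
      have hpi : prefs i = Ppref μ (x i) o' := by rw [hprefs, Function.update_self]
      rw [hpi]
      have hfxne : f x ≠ x i := by
        intro h
        exact ho (h ▸ left_mem_medInterval hμ)
      have hl0 : lvlP μ (x i) o' (f x) = 0 := by
        unfold lvlP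
        rw [if_neg hfxne, if_neg ho]
      have hl1 : 1 ≤ lvlP μ (x i) o' o' :=
        one_le_lvlP_iff.2 (Or.inr (right_mem_medInterval hμ))
      constructor
      · show lvlP μ (x i) o' (f x) ≤ lvlP μ (x i) o' o'
        omega
      · show ¬ lvlP μ (x i) o' o' ≤ lvlP μ (x i) o' (f x)
        omega
    -- monotonic independence, in upset language
    have hMInd : ∀ (U : Set A) (x R : N → TotalPreorderOn A),
        (∀ j, U ∈ Up (x j) → U ∈ Up (R j)) → U ∈ Up (f x) → U ∈ Up (f R) := by
      intro U x R hj hfx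
      have key : ∀ s : Finset N, U ∈ Up (f (fun j => if j ∈ s then R j else x j)) := by
        intro s
        induction s using Finset.induction_on with
        | empty =>
          have : (fun j => if j ∈ (∅ : Finset N) then R j else x j) = x := by
            funext j; simp
          rwa [this]
        | @insert a s ha ih =>
          set z : N → TotalPreorderOn A := fun j => if j ∈ s then R j else x j with hz
          have hza : z a = x a := by simp [hz, ha]
          have hblend : (fun j => if j ∈ insert a s then R j else x j)
              = Function.update z a (R a) := by
            funext j
            by_cases hja : j = a
            · subst hja; simp [Function.update_self]
            · simp [Function.update_of_ne hja, hz, Finset.mem_insert, hja]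
          rw [hblend]
          by_cases hxa : U ∈ Up (x a)
          · have hinst := hBMu (Function.update z a (R a)) a (z a)
            rw [Function.update_idem, Function.update_eq_self, Function.update_self] at hinst
            exact ((mem_medInterval_iff hμ).1 hinst).1 ⟨hj a hxa, ih⟩
          · have hinst := hBMu z a (R a)
            rcases ((mem_medInterval_iff hμ).1 hinst).2 ih with h | h
            · rw [hza] at h
              exact absurd h hxa
            · exact h
      have := key Finset.univ
      have huniv : (fun j => if j ∈ (Finset.univ : Finset N) then R j else x j) = R := by
        funext j; simp
      rwa [huniv] at this
    refine ⟨fun m => {T | ∃ x, {i | x i ≤ m} ⊆ T ∧ f x ≤ m}, ?_, ?_⟩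
    · rintro m _ S T ⟨x, hsub, hfx⟩ hST
      exact ⟨x, hsub.trans hST, hfx⟩
    · intro R a b
      constructor
      · intro hab m hmi hm
        obtain ⟨x, hsub, hfx⟩ := hm
        obtain ⟨U, _hUUp, heq⟩ := meetIrred_exists_mU hmi
        rw [heq] at hsub hfx ⊢
        have : U ∈ Up (f R) :=
          hMInd U x R (fun j hjU => le_mU_iff.1 (hsub (le_mU_iff.2 hjU))) (le_mU_iff.1 hfx)
        exact (le_mU_iff.2 this) a b hab
      · intro h
        by_contra hab
        set S : Set (TotalPreorderOn A) := {m | f R ≤ m ∧ ¬ m.1 a b} with hS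
        have hSne : S.Nonempty := by
          obtain ⟨U, hU, hbU, haU⟩ := exists_sep hab
          exact ⟨mU U, le_mU_iff.2 hU, fun h' => haU (h' hbU)⟩
        obtain ⟨m, hmS, hmax⟩ :=
          Set.Finite.exists_maximalFor id S (Set.toFinite S) hSne
        have hmi : MeetIrred m := by
          intro Y hY
          by_contra hmY
          have hs : ∀ R' ∈ Y, R'.1 a b := by
            intro R' hR'
            have h1 : m ≤ R' := hY.1 hR'
            by_contra hR'ab
            have hR'S : R' ∈ S := ⟨hmS.1.trans h1, hR'ab⟩
            have hmR : m = R' := le_antisymm h1 (hmax hR'S h1)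
            rw [← hmR] at hR'
            exact hmY hR'
          set s : TotalPreorderOn A :=
            ⟨Relation.ReflTransGen (fun c d => m.1 c d ∨ (c = a ∧ d = b)),
              fun _ => Relation.ReflTransGen.refl,
              fun _ _ _ h1 h2 => Relation.ReflTransGen.trans h1 h2, by
              intro c d
              rcases m.total' c d with h | h
              · exact Or.inl (Relation.ReflTransGen.single (Or.inl h))
              · exact Or.inr (Relation.ReflTransGen.single (Or.inl h))⟩ with hsdef
          have hsY : s ∈ lowerBounds Y := by
            intro R' hR' c d hcd
            induction hcd with
            | refl => exact R'.refl' _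
            | @tail e g _h hstep ih =>
              refine R'.trans' ih ?_
              rcases hstep with hm' | ⟨rfl, rfl⟩
              · exact hY.1 hR' e g hm'
              · exact hs R' hR'
          have hsm : s ≤ m := hY.2 hsY
          exact hmS.2 (hsm a b (Relation.ReflTransGen.single (Or.inr ⟨rfl, rfl⟩)))
        exact hmS.2 (h m hmi ⟨R, fun j hj => hj, hmS.1⟩)
  · rintro ⟨F, hfilt, hrep⟩ D hD prefs hmem tops htops i y hstrict
    obtain ⟨t, htop, huni⟩ := hD.1 (prefs i) (hmem i)
    have ht : tops i = t := htop.2 (tops i) (htops i).1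
    have hBM : f tops ∈ medInterval μ (tops i) (f (Function.update tops i y)) :=
      bmu_of_rep hμ hfilt hrep tops i y
    by_cases ho : f tops = tops i
    · exact hstrict.2 (ho ▸ (htops i).1 (f (Function.update tops i y)))
    · rw [ht] at hBM ho
      exact huni (f (Function.update tops i y)) (f tops) hBM ho hstrict
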